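/- Backpropagation limit in the neural ODE regime (Theorem 5.1, first case). Fix d ≥ 1, an input x ∈ ℝ^d, an activation σ ∈ C³(ℝ,ℝ) with σ(0)=0, σ'(0)=1, bounded third derivative, and σ Lipschitz. Let Ā ∈ H¹([0,1], ℝ^{d×d}) and b̄ ∈ H¹([0,1], ℝ^d). For each L ∈ ℕ define h_0^{(L)} = x, h_{k+1}^{(L)} = h_k^{(L)} + L^{-1} σ_d(Ā_{k/L} h_k^{(L)} + b̄_{k/L}), and the backward Jacobians g_L^{(L)} = I_d, g_k^{(L)} = g_{k+1}^{(L)} (I_d + L^{-1} diag(σ'_d(Ā_{k/L} h_k^{(L)} + b̄_{k/L})) Ā_{k/L}) for k = L−1,…,0; define the interpolation Ḡ_t^{(L)} = g_{k+1}^{(L)} for k/L < t ≤ (k+1)/L (with Ḡ_0^{(L)} = g_0^{(L)}). Let H : [0,1] → ℝ^d solve dH_t/dt = σ_d(Ā_t H_t + b̄_t), H_0 = x, and let G : [0,1] → ℝ^{d×d} solve the backward linear ODE dG_t/dt = −G_t diag(σ'_d(Ā_t H_t + b̄_t)) Ā_t with G_1 = I_d. Then lim_{L→∞} sup_{0 ≤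 t ≤ 1} ‖G_t − Ḡ_t^{(L)}‖ = 0. -/

import Mathlib

open MeasureTheory Filter Set

/-- Componentwise application of a scalar function to a vector in `ℝ^d`. -/
noncomputable def sigd {d : ℕ} (σ : ℝ → ℝ) (z : EuclideanSpace ℝ (Fin d)) :
    EuclideanSpace ℝ (Fin d) :=
  WithLp.toLp 2 (fun i => σ (z i))

/-- The diagonal matrix `diag(v)`, viewed as a continuous linear map on `ℝ^d`. -/
noncomputable def diagCLM {d : ℕ} (v : EuclideanSpace ℝ (Fin d)) :
    EuclideanSpace ℝ (Fin d) →L[ℝ] EuclideanSpace ℝ (Fin d) :=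
  Matrix.toEuclideanCLM (𝕜 := ℝ) (Matrix.diagonal (fun i => v i))

section Helpers

lemma diagCLM_apply {d : ℕ} (v x : EuclideanSpace ℝ (Fin d)) (i : Fin d) :
    diagCLM v x i = v i * x i := by
  have : diagCLM v x = Matrix.toEuclideanLin (Matrix.diagonal (fun i => v i)) x := rfl
  rw [this, Matrix.toEuclideanLin_apply]
  simp [Matrix.mulVec_diagonal]

lemma coord_abs_le_norm {d : ℕ} (z : EuclideanSpace ℝ (Fin d)) (i : Fin d) :
    |z i| ≤ ‖z‖ := by
  rw [EuclideanSpace.norm_eq]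
  have h1 : |z i| = Real.sqrt (‖z i‖ ^ 2) := by
    rw [Real.sqrt_sq_eq_abs]; simp [Real.norm_eq_abs]
  rw [h1]
  apply Real.sqrt_le_sqrt
  exact Finset.single_le_sum (f := fun j => ‖z j‖ ^ 2) (fun j _ => by positivity)
    (Finset.mem_univ i)

lemma euclid_norm_le {d : ℕ} (u v : EuclideanSpace ℝ (Fin d)) (C : ℝ) (hC : 0 ≤ C)
    (hyp : ∀ i, |u i| ≤ C * |v i|) : ‖u‖ ≤ C * ‖v‖ := by
  rw [EuclideanSpace.norm_eq, EuclideanSpace.norm_eq, ← Real.sqrt_sq hC,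
    ← Real.sqrt_mul (by positivity), Finset.mul_sum]
  apply Real.sqrt_le_sqrt
  apply Finset.sum_le_sum
  intro i _
  have h1 : ‖u i‖ ^ 2 ≤ (C * |v i|) ^ 2 := by
    rw [Real.norm_eq_abs]
    exact pow_le_pow_left₀ (abs_nonneg _) (hyp i) 2
  calc ‖u i‖ ^ 2 ≤ (C * |v i|) ^ 2 := h1
    _ = C ^ 2 * ‖v i‖ ^ 2 := by rw [mul_pow]; simp [Real.norm_eq_abs]

lemma euclid_norm_le_of_coord {d : ℕ} (u : EuclideanSpace ℝ (Fin d)) (C : ℝ) (hC : 0 ≤ C)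
    (h : ∀ i, |u i| ≤ C) : ‖u‖ ≤ C * Real.sqrt d := by
  rw [EuclideanSpace.norm_eq]
  have hsum : ∑ i, ‖u i‖ ^ 2 ≤ ∑ _i : Fin d, C ^ 2 :=
    Finset.sum_le_sum fun i _ => by
      rw [Real.norm_eq_abs]; exact pow_le_pow_left₀ (abs_nonneg _) (h i) 2
  calc Real.sqrt (∑ i, ‖u i‖ ^ 2) ≤ Real.sqrt (∑ _i : Fin d, C ^ 2) := Real.sqrt_le_sqrt hsum
    _ = Real.sqrt ((d : ℝ) * C ^ 2) := by
        rw [Finset.sum_const, Finset.card_univ, Fintype.card_fin, nsmul_eq_mul]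
    _ = C * Real.sqrt d := by
        rw [Real.sqrt_mul (by positivity), Real.sqrt_sq hC]; ring

lemma diagCLM_opNorm {d : ℕ} (v : EuclideanSpace ℝ (Fin d)) : ‖diagCLM v‖ ≤ ‖v‖ := by
  apply ContinuousLinearMap.opNorm_le_bound _ (norm_nonneg v)
  intro x
  apply euclid_norm_le
  · exact norm_nonneg v
  · intro i
    rw [diagCLM_apply, abs_mul]
    exact mul_le_mul_of_nonneg_right (coord_abs_le_norm v i) (abs_nonneg _)

lemma diagCLM_sub_opNorm {d : ℕ} (v w : EuclideanSpace ℝ (Fin d)) :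
    ‖diagCLM v - diagCLM w‖ ≤ ‖v - w‖ := by
  have key : diagCLM v - diagCLM w = diagCLM (v - w) := by
    ext x i
    have h1 : (diagCLM v - diagCLM w) x = diagCLM v x - diagCLM w x := rfl
    rw [h1]
    have h2 : (diagCLM v x - diagCLM w x) i = diagCLM v x i - diagCLM w x i := rfl
    rw [h2, diagCLM_apply, diagCLM_apply, diagCLM_apply]
    have h3 : (v - w) i = v i - w i := rfl
    rw [h3, sub_mul]
  rw [key]; exact diagCLM_opNorm _

lemma sigd_lip {d : ℕ} (f : ℝ → ℝ) (C : ℝ) (hC : 0 ≤ C) (a b : EuclideanSpace ℝ (Fin d))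
    (hf : ∀ i : Fin d, |f (a i) - f (b i)| ≤ C * |a i - b i|) :
    ‖sigd f a - sigd f b‖ ≤ C * ‖a - b‖ := by
  apply euclid_norm_le _ _ _ hC
  intro i
  have h1 : (sigd f a - sigd f b) i = f (a i) - f (b i) := rfl
  have h2 : (a - b) i = a i - b i := rfl
  rw [h1, h2]
  exact hf i

lemma discrete_gronwall' (e : ℕ → ℝ) (α β : ℝ) (hα : 0 < α) (hβ : 0 ≤ β) (h0 : e 0 ≤ 0)
    (n : ℕ) (hrec : ∀ k < n, e (k + 1) ≤ e k * (1 + α) + β) :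
    ∀ k ≤ n, e k ≤ (β / α) * ((1 + α) ^ k - 1) := by
  intro k
  induction k with
  | zero => intro _; simpa using h0
  | succ k ih =>
    intro hk
    have hk' : k < n := lt_of_lt_of_le (Nat.lt_succ_self k) hk
    have h2 := ih (le_of_lt hk')
    have hpos : (0:ℝ) ≤ 1 + α := by linarith
    have hne : α ≠ 0 := ne_of_gt hα
    calc e (k + 1) ≤ e k * (1 + α) + β := hrec k hk'
      _ ≤ ((β / α) * ((1 + α) ^ k - 1)) * (1 + α) + β := by
          have := mul_le_mul_of_nonneg_right h2 hpos
          linarith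
      _ = (β / α) * ((1 + α) ^ (k + 1) - 1) := by field_simp; ring

lemma pow_one_add_le_exp (a : ℝ) (ha : 0 ≤ a) (k : ℕ) :
    (1 + a) ^ k ≤ Real.exp (a * k) := by
  calc (1 + a) ^ k ≤ (Real.exp a) ^ k :=
        pow_le_pow_left₀ (by linarith) (by linarith [Real.add_one_le_exp a]) k
    _ = Real.exp (a * k) := by
        rw [← Real.exp_nat_mul]; ring_nf

lemma continuous_sigd {d : ℕ} (f : ℝ → ℝ) (hf : Continuous f) :
    Continuous (fun z : EuclideanSpace ℝ (Fin d) => sigd f z) := by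
  have h1 : Continuous fun z : EuclideanSpace ℝ (Fin d) => (fun i => f (z i) : Fin d → ℝ) :=
    continuous_pi fun i => hf.comp (EuclideanSpace.proj i).continuous
  exact (PiLp.continuousLinearEquiv 2 ℝ (fun _ : Fin d => ℝ)).symm.continuous.comp h1

lemma unif_mod {X : Type*} [NormedAddCommGroup X] (f : ℝ → X)
    (hf : ContinuousOn f (Icc 0 1)) (ε : ℝ) (hε : 0 < ε) :
    ∃ δ > 0, ∀ s ∈ Icc (0:ℝ) 1, ∀ t ∈ Icc (0:ℝ) 1, |s - t| ≤ δ → ‖f s - f t‖ ≤ ε := by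
  have huc := isCompact_Icc.uniformContinuousOn_of_continuous hf
  rw [Metric.uniformContinuousOn_iff] at huc
  obtain ⟨δ, hδ, hδ'⟩ := huc ε hε
  refine ⟨δ / 2, by linarith, fun s hs t ht hst => ?_⟩
  have : dist (f s) (f t) < ε := hδ' s hs t ht (by rw [Real.dist_eq]; linarith)
  rw [dist_eq_norm] at this
  linarith

lemma ceil_grid (L : ℕ) (hL1 : 1 ≤ L) (t : ℝ) (ht0 : 0 ≤ t) (ht1 : t ≤ 1) :
    ⌈(L:ℝ)*t⌉₊ ≤ L ∧ |t - (⌈(L:ℝ)*t⌉₊ : ℝ)/(L:ℝ)| ≤ 1/(L:ℝ) ∧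
      ((⌈(L:ℝ)*t⌉₊:ℝ)/(L:ℝ)) ∈ Icc (0:ℝ) 1 := by
  have hLpos : (0:ℝ) < (L:ℝ) := by exact_mod_cast hL1
  have hkL : ⌈(L:ℝ)*t⌉₊ ≤ L := Nat.ceil_le.mpr (by nlinarith)
  have hkub : ((⌈(L:ℝ)*t⌉₊:ℕ):ℝ) ≤ (L:ℝ) * t + 1 :=
    le_of_lt (Nat.ceil_lt_add_one (by positivity))
  have hklb : (L:ℝ) * t ≤ ((⌈(L:ℝ)*t⌉₊:ℕ):ℝ) := Nat.le_ceil _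
  refine ⟨hkL, ?_, ?_⟩
  · have h1 : t ≤ ((⌈(L:ℝ)*t⌉₊:ℕ):ℝ)/(L:ℝ) := by
      rw [le_div_iff₀ hLpos]; nlinarith
    have h2 : ((⌈(L:ℝ)*t⌉₊:ℕ):ℝ)/(L:ℝ) ≤ t + 1/(L:ℝ) := by
      rw [div_le_iff₀ hLpos]
      have he : (t + 1/(L:ℝ)) * (L:ℝ) = t * (L:ℝ) + 1 := by field_simp
      rw [he]; nlinarith
    have h3 : 0 < 1/(L:ℝ) := by positivity
    rw [abs_le]; constructor <;> linarith
  · constructor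
    · positivity
    · rw [div_le_one hLpos]; exact_mod_cast hkL

end Helpers


set_option maxHeartbeats 4000000 in
/-- **Backpropagation limit in the neural ODE regime (Theorem 5.1, first case).**
With `σ ∈ C³`, `σ(0)=0`, `σ'(0)=1`, bounded third derivative, `σ` Lipschitz, and
`Ā, b̄ ∈ H¹([0,1])`, the backward Jacobians `g_L^{(L)} = I`,
`g_k^{(L)} = g_{k+1}^{(L)} (I + L⁻¹ diag(σ'_d(Ā_{k/L} h_k^{(L)} + b̄_{k/L})) Ā_{k/L})`
of the ResNet, interpolated as `Ḡ_t^{(L)} = g_⌈Lt⌉^{(L)}`, converge uniformly on `[0,1]` to the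
solution `G` of the backward linear ODE
`dG_t/dt = −G_t diag(σ'_d(Ā_t H_t + b̄_t)) Ā_t`, `G_1 = I`, where `H` solves the neural ODE. -/
theorem backprop_limit_neural_ode_regime
    (d : ℕ) (hd : 1 ≤ d) (x : EuclideanSpace ℝ (Fin d))
    -- activation function
    (σ : ℝ → ℝ) (hσC3 : ContDiff ℝ 3 σ) (hσ0 : σ 0 = 0) (hσ'0 : deriv σ 0 = 1)
    (C3 : ℝ) (hσ3 : ∀ y : ℝ, |iteratedDeriv 3 σ y| ≤ C3)
    (K : NNReal) (hσLip : LipschitzWith K σ)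
    -- weights: Ā, b̄ belong to H¹([0,1])
    (Abar : ℝ → (EuclideanSpace ℝ (Fin d) →L[ℝ] EuclideanSpace ℝ (Fin d)))
    (bbar : ℝ → EuclideanSpace ℝ (Fin d))
    (A' : ℝ → (EuclideanSpace ℝ (Fin d) →L[ℝ] EuclideanSpace ℝ (Fin d)))
    (b' : ℝ → EuclideanSpace ℝ (Fin d))
    (hA'L2 : MemLp A' 2 (volume.restrict (Icc (0:ℝ) 1)))
    (hb'L2 : MemLp b' 2 (volume.restrict (Icc (0:ℝ) 1)))
    (hAbar : ∀ t ∈ Icc (0:ℝ) 1, Abar t = Abar 0 + ∫ s in (0:ℝ)..t, A' s)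
    (hbbar : ∀ t ∈ Icc (0:ℝ) 1, bbar t = bbar 0 + ∫ s in (0:ℝ)..t, b' s)
    -- forward hidden states
    (h : ℕ → ℕ → EuclideanSpace ℝ (Fin d))
    (hh0 : ∀ L : ℕ, h L 0 = x)
    (hhrec : ∀ L : ℕ, ∀ k < L, h L (k+1) =
      h L k + ((L:ℝ))⁻¹ • sigd σ (Abar ((k:ℝ)/(L:ℝ)) (h L k) + bbar ((k:ℝ)/(L:ℝ))))
    -- backward Jacobians
    (g : ℕ → ℕ → (EuclideanSpace ℝ (Fin d) →L[ℝ] EuclideanSpace ℝ (Fin d)))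
    (hgL : ∀ L : ℕ, g L L = ContinuousLinearMap.id ℝ (EuclideanSpace ℝ (Fin d)))
    (hgrec : ∀ L : ℕ, ∀ k < L, g L k = (g L (k+1)).comp
      (ContinuousLinearMap.id ℝ (EuclideanSpace ℝ (Fin d)) + ((L:ℝ))⁻¹ •
        (diagCLM (sigd (deriv σ) (Abar ((k:ℝ)/(L:ℝ)) (h L k) + bbar ((k:ℝ)/(L:ℝ))))).comp
          (Abar ((k:ℝ)/(L:ℝ)))))
    -- solution of the forward neural ODE
    (H : ℝ → EuclideanSpace ℝ (Fin d)) (hH0 : H 0 = x)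
    (hHode : ∀ t ∈ Icc (0:ℝ) 1, HasDerivAt H (sigd σ (Abar t (H t) + bbar t)) t)
    -- solution of the backward linear ODE
    (G : ℝ → (EuclideanSpace ℝ (Fin d) →L[ℝ] EuclideanSpace ℝ (Fin d)))
    (hG1 : G 1 = ContinuousLinearMap.id ℝ (EuclideanSpace ℝ (Fin d)))
    (hGode : ∀ t ∈ Icc (0:ℝ) 1, HasDerivAt G
      (-(G t).comp ((diagCLM (sigd (deriv σ) (Abar t (H t) + bbar t))).comp (Abar t))) t) :
    Tendsto (fun L : ℕ => ⨆ t : Icc (0:ℝ) 1, ‖G t - g L ⌈(L:ℝ) * (t:ℝ)⌉₊‖)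
      atTop (nhds 0) := by
  ------------------------------------------------------------------
  -- Step A: continuity of the data on [0,1]
  ------------------------------------------------------------------
  have hKnn : (0:ℝ) ≤ (K:ℝ) := K.2
  have hAc : ContinuousOn Abar (Icc (0:ℝ) 1) := by
    have hint : IntegrableOn A' (uIcc (0:ℝ) 1) volume := by
      rw [uIcc_of_le zero_le_one]
      exact memLp_one_iff_integrable.mp (hA'L2.mono_exponent (by norm_num))
    have h2 : ContinuousOn (fun t => ∫ s in (0:ℝ)..t, A' s) (uIcc (0:ℝ) 1) :=
      intervalIntegral.continuousOn_primitive_interval hint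
    rw [uIcc_of_le zero_le_one] at h2
    exact ContinuousOn.congr (continuousOn_const.add h2) hAbar
  have hbc : ContinuousOn bbar (Icc (0:ℝ) 1) := by
    have hint : IntegrableOn b' (uIcc (0:ℝ) 1) volume := by
      rw [uIcc_of_le zero_le_one]
      exact memLp_one_iff_integrable.mp (hb'L2.mono_exponent (by norm_num))
    have h2 : ContinuousOn (fun t => ∫ s in (0:ℝ)..t, b' s) (uIcc (0:ℝ) 1) :=
      intervalIntegral.continuousOn_primitive_interval hint
    rw [uIcc_of_le zero_le_one] at h2
    exact ContinuousOn.congr (continuousOn_const.add h2) hbbar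
  have hHc : ContinuousOn H (Icc (0:ℝ) 1) :=
    fun t ht => ((hHode t ht).continuousAt).continuousWithinAt
  have hGc : ContinuousOn G (Icc (0:ℝ) 1) :=
    fun t ht => ((hGode t ht).continuousAt).continuousWithinAt
  ------------------------------------------------------------------
  -- Step B: bounds on the data
  ------------------------------------------------------------------
  obtain ⟨MA, hMAnn, hMA⟩ : ∃ MA : ℝ, 0 ≤ MA ∧ ∀ t ∈ Icc (0:ℝ) 1, ‖Abar t‖ ≤ MA := by
    obtain ⟨C, hC⟩ := isCompact_Icc.exists_bound_of_continuousOn hAc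
    exact ⟨max C 0, le_max_right _ _, fun t ht => (hC t ht).trans (le_max_left _ _)⟩
  obtain ⟨Mb, hMbnn, hMb⟩ : ∃ Mb : ℝ, 0 ≤ Mb ∧ ∀ t ∈ Icc (0:ℝ) 1, ‖bbar t‖ ≤ Mb := by
    obtain ⟨C, hC⟩ := isCompact_Icc.exists_bound_of_continuousOn hbc
    exact ⟨max C 0, le_max_right _ _, fun t ht => (hC t ht).trans (le_max_left _ _)⟩
  obtain ⟨MH, hMHnn, hMH⟩ : ∃ MH : ℝ, 0 ≤ MH ∧ ∀ t ∈ Icc (0:ℝ) 1, ‖H t‖ ≤ MH := by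
    obtain ⟨C, hC⟩ := isCompact_Icc.exists_bound_of_continuousOn hHc
    exact ⟨max C 0, le_max_right _ _, fun t ht => (hC t ht).trans (le_max_left _ _)⟩
  obtain ⟨MG, hMGnn, hMG⟩ : ∃ MG : ℝ, 0 ≤ MG ∧ ∀ t ∈ Icc (0:ℝ) 1, ‖G t‖ ≤ MG := by
    obtain ⟨C, hC⟩ := isCompact_Icc.exists_bound_of_continuousOn hGc
    exact ⟨max C 0, le_max_right _ _, fun t ht => (hC t ht).trans (le_max_left _ _)⟩
  ------------------------------------------------------------------
  -- Step C: facts about σ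
  ------------------------------------------------------------------
  have hK' : ∀ y : ℝ, |deriv σ y| ≤ (K:ℝ) := by
    intro y
    simpa [Real.norm_eq_abs] using norm_deriv_le_of_lipschitz hσLip
  have hσab : ∀ a b : ℝ, |σ a - σ b| ≤ (K:ℝ) * |a - b| := by
    intro a b
    have := hσLip.dist_le_mul a b
    rwa [Real.dist_eq, Real.dist_eq] at this
  have sig_lip : ∀ a b : EuclideanSpace ℝ (Fin d),
      ‖sigd σ a - sigd σ b‖ ≤ (K:ℝ) * ‖a - b‖ := by
    intro a b
    exact sigd_lip σ (K:ℝ) hKnn a b fun i => hσab (a i) (b i)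
  have sigd_zero : sigd σ (0 : EuclideanSpace ℝ (Fin d)) = 0 := by
    ext i
    simp [sigd, hσ0]
  have sig_norm : ∀ z : EuclideanSpace ℝ (Fin d), ‖sigd σ z‖ ≤ (K:ℝ) * ‖z‖ := by
    intro z
    have := sig_lip z 0
    simpa [sigd_zero] using this
  set Kd : ℝ := (K:ℝ) * Real.sqrt d with hKdDef
  have hKdnn : 0 ≤ Kd := by positivity
  have diag_norm : ∀ z : EuclideanSpace ℝ (Fin d),
      ‖diagCLM (sigd (deriv σ) z)‖ ≤ Kd := by
    intro z
    refine (diagCLM_opNorm _).trans ?_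
    exact euclid_norm_le_of_coord _ (K:ℝ) hKnn fun i => hK' (z i)
  ------------------------------------------------------------------
  -- Step D: bound on the discrete trajectories, and local Lipschitz const of deriv σ
  ------------------------------------------------------------------
  obtain ⟨Mh, hMhnn, hhb⟩ : ∃ Mh : ℝ, 0 ≤ Mh ∧ ∀ L : ℕ, 1 ≤ L → ∀ k ≤ L, ‖h L k‖ ≤ Mh := by
    refine ⟨(‖x‖ + (K:ℝ)*Mb) * Real.exp ((K:ℝ)*MA + 1), by positivity, ?_⟩
    intro L hL1 k hkL
    have hLpos : (0:ℝ) < (L:ℝ) := by exact_mod_cast hL1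
    set c0 : ℝ := (K:ℝ)*MA + 1 with hc0
    have hc0pos : (0:ℝ) < c0 := by positivity
    have key : ∀ j ≤ L, ‖h L j‖ + (K:ℝ)*Mb ≤ (‖x‖ + (K:ℝ)*Mb) * (1 + c0/(L:ℝ))^j := by
      intro j
      induction j with
      | zero => intro _; simp [hh0]
      | succ j ih =>
        intro hj
        have hjL : j < L := lt_of_lt_of_le (Nat.lt_succ_self j) hj
        have ih' := ih (le_of_lt hjL)
        have hmem : (j:ℝ)/(L:ℝ) ∈ Icc (0:ℝ) 1 := by
          constructor
          · positivity
          · rw [div_le_one hLpos]; exact_mod_cast le_of_lt hjL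
        have hb1 : ‖sigd σ (Abar ((j:ℝ)/(L:ℝ)) (h L j) + bbar ((j:ℝ)/(L:ℝ)))‖ ≤
            (K:ℝ) * (MA * ‖h L j‖ + Mb) := by
          refine (sig_norm _).trans (mul_le_mul_of_nonneg_left ?_ hKnn)
          calc ‖Abar ((j:ℝ)/(L:ℝ)) (h L j) + bbar ((j:ℝ)/(L:ℝ))‖
              ≤ ‖Abar ((j:ℝ)/(L:ℝ)) (h L j)‖ + ‖bbar ((j:ℝ)/(L:ℝ))‖ := norm_add_le _ _
            _ ≤ MA * ‖h L j‖ + Mb := by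
                refine add_le_add ?_ (hMb _ hmem)
                exact le_trans ((Abar _).le_opNorm _)
                  (mul_le_mul_of_nonneg_right (hMA _ hmem) (norm_nonneg _))
        have hstep : ‖h L (j+1)‖ ≤ ‖h L j‖ + (L:ℝ)⁻¹ * ((K:ℝ) * (MA * ‖h L j‖ + Mb)) := by
          rw [hhrec L j hjL]
          refine (norm_add_le _ _).trans ?_
          refine add_le_add (le_refl _) ?_
          rw [norm_smul, norm_inv, Real.norm_natCast]
          exact mul_le_mul_of_nonneg_left hb1 (by positivity)
        have hfac : (0:ℝ) ≤ 1 + c0/(L:ℝ) := by positivity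
        have hLinv : (0:ℝ) < (L:ℝ)⁻¹ := by positivity
        have hnn : (0:ℝ) ≤ ‖h L j‖ := norm_nonneg _
        have hmid : ‖h L j‖ + (L:ℝ)⁻¹ * ((K:ℝ) * (MA * ‖h L j‖ + Mb)) + (K:ℝ)*Mb ≤
            (‖h L j‖ + (K:ℝ)*Mb) * (1 + c0/(L:ℝ)) := by
          have hc0L : c0/(L:ℝ) = c0 * (L:ℝ)⁻¹ := by ring
          rw [hc0L, hc0]
          have hKMb : (0:ℝ) ≤ (K:ℝ)*Mb := by positivity
          nlinarith [mul_nonneg hKnn hMAnn, mul_nonneg (mul_nonneg hKnn hMAnn) hnn,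
            mul_nonneg hKMb (le_of_lt hLinv), mul_nonneg hKnn hMbnn]
        calc ‖h L (j+1)‖ + (K:ℝ)*Mb
            ≤ (‖h L j‖ + (K:ℝ)*Mb) * (1 + c0/(L:ℝ)) := by linarith
          _ ≤ ((‖x‖ + (K:ℝ)*Mb) * (1 + c0/(L:ℝ))^j) * (1 + c0/(L:ℝ)) :=
              mul_le_mul_of_nonneg_right ih' hfac
          _ = (‖x‖ + (K:ℝ)*Mb) * (1 + c0/(L:ℝ))^(j+1) := by ring
    have hpow : (1 + c0/(L:ℝ))^k ≤ Real.exp c0 := by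
      refine (pow_one_add_le_exp (c0/(L:ℝ)) (by positivity) k).trans ?_
      apply Real.exp_le_exp.mpr
      rw [div_mul_eq_mul_div, div_le_iff₀ hLpos]
      have : (k:ℝ) ≤ (L:ℝ) := by exact_mod_cast hkL
      nlinarith
    have := key k hkL
    have hxnn : (0:ℝ) ≤ ‖x‖ + (K:ℝ)*Mb := by positivity
    have h2 : (‖x‖ + (K:ℝ)*Mb) * (1 + c0/(L:ℝ))^k ≤ (‖x‖ + (K:ℝ)*Mb) * Real.exp c0 :=
      mul_le_mul_of_nonneg_left hpow hxnn
    have hKMb : (0:ℝ) ≤ (K:ℝ)*Mb := by positivity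
    rw [hc0] at h2
    linarith
  set R : ℝ := MA * Mh + MA * MH + 2 * Mb + 1 with hRdef
  have hRnn : 0 < R := by positivity
  obtain ⟨C2, hC2nn, hC2⟩ : ∃ C2 : ℝ, 0 ≤ C2 ∧ ∀ a b : ℝ, a ∈ Icc (-R) R → b ∈ Icc (-R) R →
      |deriv σ a - deriv σ b| ≤ C2 * |a - b| := by
    have hσ2 : ContDiff ℝ 2 (deriv σ) := by
      have h3 : ContDiff ℝ ((2:ℕ) + (1:ℕ) : ℕ) σ := by exact_mod_cast hσC3
      have := ContDiff.iterate_deriv' 2 1 h3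
      simpa using this
    have hcont2 : Continuous (deriv (deriv σ)) := hσ2.continuous_deriv (by norm_num)
    obtain ⟨C2, hC2b⟩ := (isCompact_Icc (a := -R) (b := R)).exists_bound_of_continuousOn
      hcont2.continuousOn
    refine ⟨max C2 0, le_max_right _ _, ?_⟩
    intro a b ha hb
    have hder : ∀ y ∈ Icc (-R) R, HasDerivWithinAt (deriv σ) (deriv (deriv σ) y) (Icc (-R) R) y := by
      intro y _
      exact ((hσ2.differentiable (by norm_num)).differentiableAt.hasDerivAt).hasDerivWithinAt
    have hbd : ∀ y ∈ Icc (-R) R, ‖deriv (deriv σ) y‖ ≤ max C2 0 := fun y hy =>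
      (hC2b y hy).trans (le_max_left _ _)
    have := Convex.norm_image_sub_le_of_norm_hasDerivWithin_le hder hbd (convex_Icc _ _) hb ha
    simpa [Real.norm_eq_abs] using this
  have sig'_lip : ∀ a b : EuclideanSpace ℝ (Fin d), ‖a‖ ≤ R → ‖b‖ ≤ R →
      ‖sigd (deriv σ) a - sigd (deriv σ) b‖ ≤ C2 * ‖a - b‖ := by
    intro a b ha hb
    refine sigd_lip _ C2 hC2nn a b fun i => hC2 _ _ ?_ ?_
    · have := coord_abs_le_norm a i
      constructor <;> [linarith [abs_le.mp ((coord_abs_le_norm a i).trans ha)];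
        linarith [abs_le.mp ((coord_abs_le_norm a i).trans ha)]]
    · constructor <;> [linarith [abs_le.mp ((coord_abs_le_norm b i).trans hb)];
        linarith [abs_le.mp ((coord_abs_le_norm b i).trans hb)]]
  ------------------------------------------------------------------
  -- Step E: the continuous-time vector fields and their continuity
  ------------------------------------------------------------------
  set zfun : ℝ → EuclideanSpace ℝ (Fin d) := fun t => Abar t (H t) + bbar t with hzfunDef
  set φfun : ℝ → EuclideanSpace ℝ (Fin d) := fun t => sigd σ (zfun t) with hφfunDef
  set Bd : ℝ → (EuclideanSpace ℝ (Fin d) →L[ℝ] EuclideanSpace ℝ (Fin d)) :=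
    fun t => (diagCLM (sigd (deriv σ) (zfun t))).comp (Abar t) with hBdDef
  set ψ : ℝ → (EuclideanSpace ℝ (Fin d) →L[ℝ] EuclideanSpace ℝ (Fin d)) :=
    fun t => (G t).comp (Bd t) with hψDef
  have hzc : ContinuousOn zfun (Icc (0:ℝ) 1) := by
    apply ContinuousOn.add ?_ hbc
    exact isBoundedBilinearMap_apply.continuous.comp_continuousOn (hAc.prodMk hHc)
  have hφc : ContinuousOn φfun (Icc (0:ℝ) 1) :=
    (continuous_sigd σ (hσC3.continuous)).comp_continuousOn hzc
  have hBdc : ContinuousOn Bd (Icc (0:ℝ) 1) := by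
    have hdiagLip : LipschitzWith 1 (fun v : EuclideanSpace ℝ (Fin d) => diagCLM v) := by
      apply LipschitzWith.of_dist_le_mul
      intro v w
      rw [dist_eq_norm, dist_eq_norm, NNReal.coe_one, one_mul]
      exact diagCLM_sub_opNorm v w
    have h1 : ContinuousOn (fun t => diagCLM (sigd (deriv σ) (zfun t))) (Icc (0:ℝ) 1) :=
      hdiagLip.continuous.comp_continuousOn
        ((continuous_sigd (deriv σ) (hσC3.continuous_deriv (by norm_num))).comp_continuousOn hzc)
    exact isBoundedBilinearMap_comp.continuous.comp_continuousOn (h1.prodMk hAc)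
  have hψc : ContinuousOn ψ (Icc (0:ℝ) 1) :=
    isBoundedBilinearMap_comp.continuous.comp_continuousOn (hGc.prodMk hBdc)
  have hzbound : ∀ t ∈ Icc (0:ℝ) 1, ‖zfun t‖ ≤ R := by
    intro t ht
    have h1 : ‖Abar t (H t)‖ ≤ MA * MH :=
      le_trans ((Abar t).le_opNorm (H t))
        (mul_le_mul (hMA t ht) (hMH t ht) (norm_nonneg _) hMAnn)
    calc ‖zfun t‖ ≤ ‖Abar t (H t)‖ + ‖bbar t‖ := norm_add_le _ _
      _ ≤ MA * MH + Mb := add_le_add h1 (hMb t ht)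
      _ ≤ R := by rw [hRdef]; nlinarith
  ------------------------------------------------------------------
  -- Step F: forward error estimate
  ------------------------------------------------------------------
  have hfwd : ∀ ε₁ : ℝ, 0 < ε₁ → ∃ N : ℕ, 1 ≤ N ∧ ∀ L : ℕ, N ≤ L → ∀ k ≤ L,
      ‖h L k - H ((k:ℝ)/(L:ℝ))‖ ≤ ε₁ := by
    intro ε₁ hε₁
    set c1 : ℝ := (K:ℝ) * MA + 1 with hc1
    have hc1pos : (0:ℝ) < c1 := by positivity
    have hc1ge1 : (1:ℝ) ≤ c1 := by rw [hc1]; nlinarith [mul_nonneg hKnn hMAnn]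
    set ε' : ℝ := ε₁ / Real.exp c1 with hε'def
    have hε'pos : 0 < ε' := div_pos hε₁ (Real.exp_pos _)
    obtain ⟨δ, hδpos, hδ⟩ := unif_mod φfun hφc ε' hε'pos
    refine ⟨max 1 (⌈1/δ⌉₊ + 1), le_max_left _ _, ?_⟩
    intro L hL k hkL
    have hL1 : 1 ≤ L := le_trans (le_max_left _ _) hL
    have hLpos : (0:ℝ) < (L:ℝ) := by exact_mod_cast hL1
    have hLδ : 1/(L:ℝ) ≤ δ := by
      have h1 : (⌈1/δ⌉₊ + 1 : ℕ) ≤ L := le_trans (le_max_right _ _) hL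
      have h2 : (1:ℝ)/δ ≤ (L:ℝ) := by
        calc (1:ℝ)/δ ≤ ⌈1/δ⌉₊ := Nat.le_ceil _
          _ ≤ (L:ℝ) := by exact_mod_cast le_trans (Nat.le_succ _) h1
      rw [div_le_iff₀ hLpos]
      rw [div_le_iff₀ hδpos] at h2
      linarith
    have hgrid : ∀ j : ℕ, j ≤ L → (j:ℝ)/(L:ℝ) ∈ Icc (0:ℝ) 1 := by
      intro j hj
      exact ⟨by positivity, by rw [div_le_one hLpos]; exact_mod_cast hj⟩
    set err : ℕ → ℝ := fun j => ‖h L j - H ((j:ℝ)/(L:ℝ))‖ with herrdef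
    have herr0 : err 0 ≤ 0 := by
      have hq : ((0:ℕ):ℝ)/(L:ℝ) = (0:ℝ) := by norm_num
      have : err 0 = ‖h L 0 - H (((0:ℕ):ℝ)/(L:ℝ))‖ := rfl
      rw [this, hq, hH0, hh0]
      simp
    have hrec : ∀ j, j < L → err (j+1) ≤ err j * (1 + c1/(L:ℝ)) + ε'/(L:ℝ) := by
      intro j hjL
      have hhrec' := hhrec L j hjL
      set t0 : ℝ := (j:ℝ)/(L:ℝ) with ht0
      set t1 : ℝ := ((j:ℝ)+1)/(L:ℝ) with ht1
      have hcast : (((j+1:ℕ)):ℝ)/(L:ℝ) = t1 := by push_cast; ring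
      have ht0mem : t0 ∈ Icc (0:ℝ) 1 := hgrid j (le_of_lt hjL)
      have ht1mem : t1 ∈ Icc (0:ℝ) 1 := by
        have := hgrid (j+1) hjL
        rwa [hcast] at this
      have ht01 : t0 ≤ t1 := by
        rw [ht0, ht1]
        gcongr
        linarith
      have hsub : Icc t0 t1 ⊆ Icc (0:ℝ) 1 :=
        fun s hs => ⟨le_trans ht0mem.1 hs.1, le_trans hs.2 ht1mem.2⟩
      have huIcc : uIcc t0 t1 = Icc t0 t1 := uIcc_of_le ht01
      have hφint : IntervalIntegrable φfun volume t0 t1 := by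
        apply ContinuousOn.intervalIntegrable
        rw [huIcc]
        exact hφc.mono hsub
      have hFTC : ∫ s in t0..t1, φfun s = H t1 - H t0 := by
        apply intervalIntegral.integral_eq_sub_of_hasDerivAt
        · intro s hs
          rw [huIcc] at hs
          exact hHode s (hsub hs)
        · exact hφint
      set Fk := sigd σ (Abar t0 (h L j) + bbar t0) with hFk
      have ht1t0 : t1 - t0 = 1/(L:ℝ) := by
        rw [ht0, ht1]
        field_simp
        ring
      have hconst : (∫ _s in t0..t1, Fk) = (L:ℝ)⁻¹ • Fk := by
        rw [intervalIntegral.integral_const, ht1t0, one_div]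
      have hint2 : (∫ s in t0..t1, (Fk - φfun s)) = (L:ℝ)⁻¹ • Fk - (H t1 - H t0) := by
        rw [intervalIntegral.integral_sub intervalIntegrable_const hφint, hconst, hFTC]
      have hkey : h L (j+1) - H t1 = (h L j - H t0) + ∫ s in t0..t1, (Fk - φfun s) := by
        rw [hint2, hhrec']
        abel
      have herrj : ‖h L j - H t0‖ = err j := rfl
      have hbound : ∀ s ∈ Set.uIoc t0 t1, ‖Fk - φfun s‖ ≤ ε' + (K:ℝ)*MA*(err j) := by
        intro s hs
        have hsmem : s ∈ Icc t0 t1 := by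
          rw [uIoc_of_le ht01] at hs
          exact Ioc_subset_Icc_self hs
        have hsI : s ∈ Icc (0:ℝ) 1 := hsub hsmem
        have h1 : ‖φfun t0 - φfun s‖ ≤ ε' := by
          apply hδ t0 ht0mem s hsI
          rw [abs_sub_comm, abs_of_nonneg (by linarith [hsmem.1])]
          linarith [hsmem.2, ht1t0, hLδ]
        have h2 : ‖Fk - φfun t0‖ ≤ (K:ℝ)*MA*(err j) := by
          have hphit0 : φfun t0 = sigd σ (Abar t0 (H t0) + bbar t0) := rfl
          rw [hFk, hphit0]
          have hl := sig_lip (Abar t0 (h L j) + bbar t0) (Abar t0 (H t0) + bbar t0)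
          have harg : (Abar t0 (h L j) + bbar t0) - (Abar t0 (H t0) + bbar t0)
              = Abar t0 (h L j - H t0) := by
            rw [map_sub]
            abel
          rw [harg] at hl
          refine hl.trans ?_
          rw [← herrj]
          calc (K:ℝ) * ‖Abar t0 (h L j - H t0)‖
              ≤ (K:ℝ) * (MA * ‖h L j - H t0‖) := by
                apply mul_le_mul_of_nonneg_left ?_ hKnn
                exact le_trans ((Abar t0).le_opNorm _)
                  (mul_le_mul_of_nonneg_right (hMA t0 ht0mem) (norm_nonneg _))
            _ = (K:ℝ)*MA*‖h L j - H t0‖ := by ring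
        calc ‖Fk - φfun s‖ = ‖(Fk - φfun t0) + (φfun t0 - φfun s)‖ := by
              congr 1
              abel
          _ ≤ ‖Fk - φfun t0‖ + ‖φfun t0 - φfun s‖ := norm_add_le _ _
          _ ≤ (K:ℝ)*MA*(err j) + ε' := add_le_add h2 h1
          _ = ε' + (K:ℝ)*MA*(err j) := by ring
      have hnormint : ‖∫ s in t0..t1, (Fk - φfun s)‖ ≤ (ε' + (K:ℝ)*MA*(err j)) * |t1 - t0| :=
        intervalIntegral.norm_integral_le_of_norm_le_const hbound
      have hT : |t1 - t0| = 1/(L:ℝ) := by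
        rw [ht1t0]
        exact abs_of_pos (by positivity)
      have herr1 : err (j+1) = ‖h L (j+1) - H t1‖ := by
        have : err (j+1) = ‖h L (j+1) - H ((((j+1:ℕ)):ℝ)/(L:ℝ))‖ := rfl
        rw [this, hcast]
      rw [herr1, hkey]
      refine (norm_add_le _ _).trans ?_
      rw [hT] at hnormint
      rw [herrj]
      have herrnn : (0:ℝ) ≤ err j := norm_nonneg _
      have hKMA : (K:ℝ)*MA ≤ c1 := by rw [hc1]; linarith
      have hLinv : (0:ℝ) < 1/(L:ℝ) := by positivity
      have hfin : (ε' + (K:ℝ)*MA*(err j)) * (1/(L:ℝ)) ≤ err j * (c1/(L:ℝ)) + ε'/(L:ℝ) := by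
        have hc1L : err j * (c1/(L:ℝ)) = (c1 * err j) * (1/(L:ℝ)) := by ring
        have hε'L : ε'/(L:ℝ) = ε' * (1/(L:ℝ)) := by ring
        rw [hc1L, hε'L]
        have : ε' + (K:ℝ)*MA*(err j) ≤ c1 * err j + ε' := by nlinarith
        nlinarith
      calc err j + ‖∫ s in t0..t1, (Fk - φfun s)‖
          ≤ err j + (ε' + (K:ℝ)*MA*(err j)) * (1/(L:ℝ)) := by linarith [hnormint]
        _ ≤ err j + (err j * (c1/(L:ℝ)) + ε'/(L:ℝ)) := by linarith [hfin]
        _ = err j * (1 + c1/(L:ℝ)) + ε'/(L:ℝ) := by ring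
    have hgron := discrete_gronwall' err (c1/(L:ℝ)) (ε'/(L:ℝ)) (by positivity)
      (by positivity) herr0 L hrec
    have hq : (ε'/(L:ℝ))/(c1/(L:ℝ)) = ε'/c1 := by
      field_simp
    have hpow : (1 + c1/(L:ℝ))^k - 1 ≤ Real.exp c1 := by
      have h1 := pow_one_add_le_exp (c1/(L:ℝ)) (by positivity) k
      have h2 : c1/(L:ℝ)*(k:ℝ) ≤ c1 := by
        rw [div_mul_eq_mul_div, div_le_iff₀ hLpos]
        have hkLr : (k:ℝ) ≤ (L:ℝ) := by exact_mod_cast hkL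
        nlinarith
      have h3 := h1.trans (Real.exp_le_exp.mpr h2)
      linarith
    have herrk : ‖h L k - H ((k:ℝ)/(L:ℝ))‖ = err k := rfl
    rw [herrk]
    calc err k ≤ (ε'/(L:ℝ))/(c1/(L:ℝ)) * ((1 + c1/(L:ℝ))^k - 1) := hgron k hkL
      _ = (ε'/c1) * ((1 + c1/(L:ℝ))^k - 1) := by rw [hq]
      _ ≤ (ε'/c1) * Real.exp c1 := by
          apply mul_le_mul_of_nonneg_left hpow (by positivity)
      _ ≤ ε' * Real.exp c1 := by
          apply mul_le_mul_of_nonneg_right ?_ (le_of_lt (Real.exp_pos _))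
          exact div_le_self (le_of_lt hε'pos) hc1ge1
      _ = ε₁ := by
          rw [hε'def]
          field_simp
  ------------------------------------------------------------------
  -- Step G: backward error estimate
  ------------------------------------------------------------------
  have hbwd : ∀ ε₂ : ℝ, 0 < ε₂ → ∃ N : ℕ, 1 ≤ N ∧ ∀ L : ℕ, N ≤ L → ∀ k ≤ L,
      ‖G ((k:ℝ)/(L:ℝ)) - g L k‖ ≤ ε₂ := by
    intro ε₂ hε₂
    set MB : ℝ := Kd * MA with hMBdef
    have hMBnn : 0 ≤ MB := by positivity
    set c2 : ℝ := MB + 1 with hc2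
    have hc2pos : (0:ℝ) < c2 := by positivity
    have hc2ge1 : (1:ℝ) ≤ c2 := by rw [hc2]; linarith
    set Ctot : ℝ := 1 + MG*(MA*C2*(1 + MA) + Kd) with hCtot
    have hCtotpos : (0:ℝ) < Ctot := by
      rw [hCtot]
      nlinarith [mul_nonneg hMGnn (add_nonneg (mul_nonneg (mul_nonneg hMAnn hC2nn)
        (by linarith : (0:ℝ) ≤ 1 + MA)) hKdnn)]
    set ρ : ℝ := ε₂ / (Ctot * Real.exp c2) with hρ
    have hρpos : 0 < ρ := div_pos hε₂ (by positivity)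
    obtain ⟨δψ, hδψpos, hδψ⟩ := unif_mod ψ hψc ρ hρpos
    obtain ⟨δz, hδzpos, hδz⟩ := unif_mod zfun hzc ρ hρpos
    obtain ⟨δA, hδApos, hδA⟩ := unif_mod Abar hAc ρ hρpos
    obtain ⟨Nf, hNf1, hNf⟩ := hfwd ρ hρpos
    set δ : ℝ := min δψ (min δz δA) with hδdef
    have hδpos : 0 < δ := lt_min hδψpos (lt_min hδzpos hδApos)
    refine ⟨max Nf (⌈1/δ⌉₊ + 1), le_trans hNf1 (le_max_left _ _), ?_⟩
    intro L hL k hkL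
    have hLNf : Nf ≤ L := le_trans (le_max_left _ _) hL
    have hL1 : 1 ≤ L := le_trans hNf1 hLNf
    have hLpos : (0:ℝ) < (L:ℝ) := by exact_mod_cast hL1
    have hLδ : 1/(L:ℝ) ≤ δ := by
      have h1 : (⌈1/δ⌉₊ + 1 : ℕ) ≤ L := le_trans (le_max_right _ _) hL
      have h2 : (1:ℝ)/δ ≤ (L:ℝ) := by
        calc (1:ℝ)/δ ≤ ⌈1/δ⌉₊ := Nat.le_ceil _
          _ ≤ (L:ℝ) := by exact_mod_cast le_trans (Nat.le_succ _) h1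
      rw [div_le_iff₀ hLpos]
      rw [div_le_iff₀ hδpos] at h2
      linarith
    have hLδψ : 1/(L:ℝ) ≤ δψ := le_trans hLδ (min_le_left _ _)
    have hLδz : 1/(L:ℝ) ≤ δz := le_trans hLδ (le_trans (min_le_right _ _) (min_le_left _ _))
    have hLδA : 1/(L:ℝ) ≤ δA := le_trans hLδ (le_trans (min_le_right _ _) (min_le_right _ _))
    have hgrid : ∀ j : ℕ, j ≤ L → (j:ℝ)/(L:ℝ) ∈ Icc (0:ℝ) 1 := by
      intro j hj
      exact ⟨by positivity, by rw [div_le_one hLpos]; exact_mod_cast hj⟩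
    set errb : ℕ → ℝ := fun i => ‖G (((L - i : ℕ):ℝ)/(L:ℝ)) - g L (L - i)‖ with herrbdef
    have herrb0 : errb 0 ≤ 0 := by
      have h2 : (((L - 0:ℕ)):ℝ)/(L:ℝ) = 1 := by
        rw [Nat.sub_zero]
        exact div_self (ne_of_gt hLpos)
      have h3 : errb 0 = ‖G (((L - 0:ℕ):ℝ)/(L:ℝ)) - g L (L - 0)‖ := rfl
      rw [h3, h2, Nat.sub_zero, hG1, hgL, sub_self, norm_zero]
    have hrecb : ∀ i, i < L → errb (i+1) ≤ errb i * (1 + c2/(L:ℝ)) + (ρ*Ctot)/(L:ℝ) := by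
      intro i hiL
      set kk : ℕ := L - (i+1) with hkk
      have hkkL : kk < L := by omega
      have hkk1 : kk + 1 = L - i := by omega
      have hgrec' : g L kk = g L (kk+1) + (L:ℝ)⁻¹ • (g L (kk+1)).comp
          ((diagCLM (sigd (deriv σ) (Abar ((kk:ℝ)/(L:ℝ)) (h L kk) +
            bbar ((kk:ℝ)/(L:ℝ))))).comp (Abar ((kk:ℝ)/(L:ℝ)))) := by
        rw [hgrec L kk hkkL, ContinuousLinearMap.comp_add, ContinuousLinearMap.comp_id,
          ContinuousLinearMap.comp_smul]
      set Btl : EuclideanSpace ℝ (Fin d) →L[ℝ] EuclideanSpace ℝ (Fin d) :=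
        (diagCLM (sigd (deriv σ) (Abar ((kk:ℝ)/(L:ℝ)) (h L kk) +
          bbar ((kk:ℝ)/(L:ℝ))))).comp (Abar ((kk:ℝ)/(L:ℝ))) with hBtl
      set t0 : ℝ := (kk:ℝ)/(L:ℝ) with ht0
      set t1 : ℝ := ((kk:ℝ)+1)/(L:ℝ) with ht1
      have hcast : (((kk+1:ℕ)):ℝ)/(L:ℝ) = t1 := by push_cast; ring
      have ht0mem : t0 ∈ Icc (0:ℝ) 1 := hgrid kk (le_of_lt hkkL)
      have ht1mem : t1 ∈ Icc (0:ℝ) 1 := by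
        have := hgrid (kk+1) hkkL
        rwa [hcast] at this
      have ht01 : t0 ≤ t1 := by
        rw [ht0, ht1]
        gcongr
        linarith
      have hsub : Icc t0 t1 ⊆ Icc (0:ℝ) 1 :=
        fun s hs => ⟨le_trans ht0mem.1 hs.1, le_trans hs.2 ht1mem.2⟩
      have huIcc : uIcc t0 t1 = Icc t0 t1 := uIcc_of_le ht01
      have ht1t0 : t1 - t0 = 1/(L:ℝ) := by
        rw [ht0, ht1]
        field_simp
        ring
      have hψint : IntervalIntegrable ψ volume t0 t1 := by
        apply ContinuousOn.intervalIntegrable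
        rw [huIcc]
        exact hψc.mono hsub
      have hFTCn : (∫ s in t0..t1, -ψ s) = G t1 - G t0 := by
        apply intervalIntegral.integral_eq_sub_of_hasDerivAt
        · intro s hs
          rw [huIcc] at hs
          exact hGode s (hsub hs)
        · exact hψint.neg
      have hFTC : (∫ s in t0..t1, ψ s) = G t0 - G t1 := by
        rw [intervalIntegral.integral_neg] at hFTCn
        have := congrArg Neg.neg hFTCn
        rw [neg_neg, neg_sub] at this
        exact this
      have hconst : (∫ _s in t0..t1, (g L (kk+1)).comp Btl) =
          (L:ℝ)⁻¹ • (g L (kk+1)).comp Btl := by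
        rw [intervalIntegral.integral_const, ht1t0, one_div]
      have hkey : G t0 - g L kk = (G t1 - g L (kk+1)) +
          ∫ s in t0..t1, (ψ s - (g L (kk+1)).comp Btl) := by
        rw [intervalIntegral.integral_sub hψint intervalIntegrable_const, hFTC, hconst, hgrec']
        abel
      have herrbi : errb i = ‖G t1 - g L (kk+1)‖ := by
        have h1 : errb i = ‖G (((L - i:ℕ):ℝ)/(L:ℝ)) - g L (L - i)‖ := rfl
        rw [h1, ← hkk1, hcast]
      have herrbi1 : errb (i+1) = ‖G t0 - g L kk‖ := rfl
      have hBtlnorm : ‖Btl‖ ≤ MB := by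
        rw [hBtl, hMBdef]
        refine (ContinuousLinearMap.opNorm_comp_le _ _).trans ?_
        exact mul_le_mul (diag_norm _) (hMA t0 ht0mem) (norm_nonneg _) hKdnn
      have hforward : ‖h L kk - H t0‖ ≤ ρ := hNf L hLNf kk (le_of_lt hkkL)
      have hznorm1 : ‖zfun t1‖ ≤ R := hzbound t1 ht1mem
      have hztil : ‖Abar t0 (h L kk) + bbar t0‖ ≤ R := by
        have h1 : ‖Abar t0 (h L kk)‖ ≤ MA * Mh := by
          refine le_trans ((Abar t0).le_opNorm _) ?_
          exact mul_le_mul (hMA t0 ht0mem) (hhb L hL1 kk (le_of_lt hkkL)) (norm_nonneg _) hMAnn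
        calc ‖Abar t0 (h L kk) + bbar t0‖ ≤ ‖Abar t0 (h L kk)‖ + ‖bbar t0‖ := norm_add_le _ _
          _ ≤ MA * Mh + Mb := add_le_add h1 (hMb t0 ht0mem)
          _ ≤ R := by rw [hRdef]; nlinarith
      have hBd1 : ‖Bd t1 - Btl‖ ≤ MA*C2*(ρ + MA*ρ) + Kd*ρ := by
        have hdecomp : Bd t1 - Btl =
            ((diagCLM (sigd (deriv σ) (zfun t1))) -
              (diagCLM (sigd (deriv σ) (Abar t0 (h L kk) + bbar t0)))).comp (Abar t1) +
            (diagCLM (sigd (deriv σ) (Abar t0 (h L kk) + bbar t0))).comp (Abar t1 - Abar t0) := by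
          rw [ContinuousLinearMap.sub_comp, ContinuousLinearMap.comp_sub]
          have hBd1' : Bd t1 = (diagCLM (sigd (deriv σ) (zfun t1))).comp (Abar t1) := rfl
          rw [hBd1', hBtl]
          abel
        have hzdiff : ‖zfun t1 - (Abar t0 (h L kk) + bbar t0)‖ ≤ ρ + MA*ρ := by
          have h1 : ‖zfun t1 - zfun t0‖ ≤ ρ := hδz t1 ht1mem t0 ht0mem (by
            rw [abs_of_nonneg (by linarith)]
            linarith)
          have h2 : ‖zfun t0 - (Abar t0 (h L kk) + bbar t0)‖ ≤ MA*ρ := by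
            have hz0 : zfun t0 = Abar t0 (H t0) + bbar t0 := rfl
            have harg : zfun t0 - (Abar t0 (h L kk) + bbar t0) = Abar t0 (H t0 - h L kk) := by
              rw [hz0, map_sub]
              abel
            rw [harg]
            refine le_trans ((Abar t0).le_opNorm _) ?_
            have : ‖H t0 - h L kk‖ = ‖h L kk - H t0‖ := norm_sub_rev _ _
            rw [this]
            exact mul_le_mul (hMA t0 ht0mem) hforward (norm_nonneg _) hMAnn
          calc ‖zfun t1 - (Abar t0 (h L kk) + bbar t0)‖
              = ‖(zfun t1 - zfun t0) + (zfun t0 - (Abar t0 (h L kk) + bbar t0))‖ := by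
                congr 1
                abel
            _ ≤ ‖zfun t1 - zfun t0‖ + ‖zfun t0 - (Abar t0 (h L kk) + bbar t0)‖ := norm_add_le _ _
            _ ≤ ρ + MA*ρ := add_le_add h1 h2
        have hdiagdiff : ‖(diagCLM (sigd (deriv σ) (zfun t1))) -
            (diagCLM (sigd (deriv σ) (Abar t0 (h L kk) + bbar t0)))‖ ≤ C2*(ρ + MA*ρ) := by
          refine (diagCLM_sub_opNorm _ _).trans ?_
          refine (sig'_lip _ _ hznorm1 hztil).trans ?_
          exact mul_le_mul_of_nonneg_left hzdiff hC2nn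
        have hAdiff : ‖Abar t1 - Abar t0‖ ≤ ρ := hδA t1 ht1mem t0 ht0mem (by
          rw [abs_of_nonneg (by linarith)]
          linarith)
        rw [hdecomp]
        refine (norm_add_le _ _).trans ?_
        have hp1 : ‖((diagCLM (sigd (deriv σ) (zfun t1))) -
            (diagCLM (sigd (deriv σ) (Abar t0 (h L kk) + bbar t0)))).comp (Abar t1)‖ ≤
            C2*(ρ + MA*ρ) * MA := by
          refine (ContinuousLinearMap.opNorm_comp_le _ _).trans ?_
          exact mul_le_mul hdiagdiff (hMA t1 ht1mem) (norm_nonneg _)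
            (by positivity)
        have hp2 : ‖(diagCLM (sigd (deriv σ) (Abar t0 (h L kk) + bbar t0))).comp
            (Abar t1 - Abar t0)‖ ≤ Kd * ρ := by
          refine (ContinuousLinearMap.opNorm_comp_le _ _).trans ?_
          exact mul_le_mul (diag_norm _) hAdiff (norm_nonneg _) hKdnn
        have : C2*(ρ + MA*ρ) * MA = MA*C2*(ρ + MA*ρ) := by ring
        linarith
      have hbound : ∀ s ∈ Set.uIoc t0 t1, ‖ψ s - (g L (kk+1)).comp Btl‖ ≤
          ρ*Ctot + errb i * MB := by
        intro s hs
        have hsmem : s ∈ Icc t0 t1 := by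
          rw [uIoc_of_le ht01] at hs
          exact Ioc_subset_Icc_self hs
        have hsI : s ∈ Icc (0:ℝ) 1 := hsub hsmem
        have hterm1 : ‖ψ s - ψ t1‖ ≤ ρ := by
          apply hδψ s hsI t1 ht1mem
          rw [abs_of_nonpos (by linarith [hsmem.2])]
          have : -(s - t1) = t1 - s := by ring
          rw [this]
          linarith [hsmem.1]
        have hterm2 : ‖(G t1).comp (Bd t1) - (G t1).comp Btl‖ ≤
            MG * (MA*C2*(ρ + MA*ρ) + Kd*ρ) := by
          rw [← ContinuousLinearMap.comp_sub]
          refine (ContinuousLinearMap.opNorm_comp_le _ _).trans ?_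
          refine mul_le_mul (hMG t1 ht1mem) hBd1 (norm_nonneg _) hMGnn
        have hterm3 : ‖(G t1 - g L (kk+1)).comp Btl‖ ≤ errb i * MB := by
          refine (ContinuousLinearMap.opNorm_comp_le _ _).trans ?_
          rw [herrbi]
          exact mul_le_mul_of_nonneg_left hBtlnorm (norm_nonneg _)
        have hψt1 : ψ t1 = (G t1).comp (Bd t1) := rfl
        have hsplit : ψ s - (g L (kk+1)).comp Btl = (ψ s - ψ t1) +
            ((G t1).comp (Bd t1) - (G t1).comp Btl) + ((G t1 - g L (kk+1)).comp Btl) := by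
          rw [ContinuousLinearMap.sub_comp, hψt1]
          abel
        rw [hsplit]
        have hCtoteq : ρ + MG * (MA*C2*(ρ + MA*ρ) + Kd*ρ) = ρ*Ctot := by
          rw [hCtot]
          ring
        calc ‖(ψ s - ψ t1) + ((G t1).comp (Bd t1) - (G t1).comp Btl) +
              ((G t1 - g L (kk+1)).comp Btl)‖
            ≤ ‖(ψ s - ψ t1) + ((G t1).comp (Bd t1) - (G t1).comp Btl)‖ +
              ‖(G t1 - g L (kk+1)).comp Btl‖ := norm_add_le _ _
          _ ≤ (‖ψ s - ψ t1‖ + ‖(G t1).comp (Bd t1) - (G t1).comp Btl‖) +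
              ‖(G t1 - g L (kk+1)).comp Btl‖ := by
                have := norm_add_le (ψ s - ψ t1) ((G t1).comp (Bd t1) - (G t1).comp Btl)
                linarith
          _ ≤ (ρ + MG * (MA*C2*(ρ + MA*ρ) + Kd*ρ)) + errb i * MB := by
                linarith
          _ = ρ*Ctot + errb i * MB := by rw [hCtoteq]
      have hnormint : ‖∫ s in t0..t1, (ψ s - (g L (kk+1)).comp Btl)‖ ≤
          (ρ*Ctot + errb i * MB) * |t1 - t0| :=
        intervalIntegral.norm_integral_le_of_norm_le_const hbound
      have hT : |t1 - t0| = 1/(L:ℝ) := by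
        rw [ht1t0]
        exact abs_of_pos (by positivity)
      rw [hT] at hnormint
      rw [herrbi1, hkey]
      refine (norm_add_le _ _).trans ?_
      rw [← herrbi]
      have herrbnn : (0:ℝ) ≤ errb i := norm_nonneg _
      have hρCnn : (0:ℝ) ≤ ρ*Ctot := by positivity
      calc errb i + ‖∫ s in t0..t1, (ψ s - (g L (kk+1)).comp Btl)‖
          ≤ errb i + (ρ*Ctot + errb i * MB) * (1/(L:ℝ)) := by linarith [hnormint]
        _ ≤ errb i * (1 + c2/(L:ℝ)) + (ρ*Ctot)/(L:ℝ) := by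
            rw [hc2]
            have h1 : (ρ*Ctot + errb i * MB) * (1/(L:ℝ)) =
              (ρ*Ctot)/(L:ℝ) + errb i * (MB/(L:ℝ)) := by ring
            have h2 : errb i * (MB/(L:ℝ)) ≤ errb i * ((MB+1)/(L:ℝ)) := by
              gcongr
              linarith
            have h3 : errb i * (1 + (MB+1)/(L:ℝ)) = errb i + errb i * ((MB+1)/(L:ℝ)) := by ring
            linarith
    have hgronb := discrete_gronwall' errb (c2/(L:ℝ)) ((ρ*Ctot)/(L:ℝ)) (by positivity)
      (by positivity) herrb0 L hrecb
    have hLk : L - (L - k) = k := by omega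
    have hgoal : ‖G ((k:ℝ)/(L:ℝ)) - g L k‖ = errb (L - k) := by
      have h1 : errb (L - k) = ‖G (((L - (L - k):ℕ):ℝ)/(L:ℝ)) - g L (L - (L - k))‖ := rfl
      rw [h1, hLk]
    have hq : ((ρ*Ctot)/(L:ℝ))/(c2/(L:ℝ)) = (ρ*Ctot)/c2 := by
      field_simp
    have hpow : (1 + c2/(L:ℝ))^(L-k) - 1 ≤ Real.exp c2 := by
      have h1 := pow_one_add_le_exp (c2/(L:ℝ)) (by positivity) (L-k)
      have h2 : c2/(L:ℝ)*((L-k:ℕ):ℝ) ≤ c2 := by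
        rw [div_mul_eq_mul_div, div_le_iff₀ hLpos]
        have hkLr : ((L-k:ℕ):ℝ) ≤ (L:ℝ) := by exact_mod_cast Nat.sub_le L k
        nlinarith
      have h3 := h1.trans (Real.exp_le_exp.mpr h2)
      linarith
    rw [hgoal]
    calc errb (L-k) ≤ ((ρ*Ctot)/(L:ℝ))/(c2/(L:ℝ)) * ((1 + c2/(L:ℝ))^(L-k) - 1) :=
          hgronb (L-k) (Nat.sub_le L k)
      _ = ((ρ*Ctot)/c2) * ((1 + c2/(L:ℝ))^(L-k) - 1) := by rw [hq]
      _ ≤ ((ρ*Ctot)/c2) * Real.exp c2 := by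
          apply mul_le_mul_of_nonneg_left hpow (by positivity)
      _ ≤ (ρ*Ctot) * Real.exp c2 := by
          apply mul_le_mul_of_nonneg_right ?_ (le_of_lt (Real.exp_pos _))
          exact div_le_self (by positivity) hc2ge1
      _ = ε₂ := by
          rw [hρ]
          field_simp
  ------------------------------------------------------------------
  -- Step H: conclusion
  ------------------------------------------------------------------
  rw [Metric.tendsto_atTop]
  intro ε hε
  obtain ⟨N₂, hN₂1, hN₂⟩ := hbwd (ε/4) (by linarith)
  obtain ⟨δG, hδGpos, hδG⟩ := unif_mod G hGc (ε/4) (by linarith)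
  refine ⟨max N₂ (⌈1/δG⌉₊ + 1), ?_⟩
  intro L hL
  have hLN₂ : N₂ ≤ L := le_trans (le_max_left _ _) hL
  have hL1 : 1 ≤ L := le_trans hN₂1 hLN₂
  have hLpos : (0:ℝ) < (L:ℝ) := by exact_mod_cast hL1
  have hLδ : 1/(L:ℝ) ≤ δG := by
    have h1 : (⌈1/δG⌉₊ + 1 : ℕ) ≤ L := le_trans (le_max_right _ _) hL
    have h2 : (1:ℝ)/δG ≤ (L:ℝ) := by
      calc (1:ℝ)/δG ≤ ⌈1/δG⌉₊ := Nat.le_ceil _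
        _ ≤ (L:ℝ) := by exact_mod_cast le_trans (Nat.le_succ _) h1
    rw [div_le_iff₀ hLpos]
    rw [div_le_iff₀ hδGpos] at h2
    linarith
  -- pointwise bound
  have hpt : ∀ t : Icc (0:ℝ) 1, ‖G t - g L ⌈(L:ℝ) * (t:ℝ)⌉₊‖ ≤ ε/2 := by
    rintro ⟨t, ht0, ht1⟩
    obtain ⟨hkL, htk, hkmem⟩ := ceil_grid L hL1 t ht0 ht1
    set k : ℕ := ⌈(L:ℝ) * t⌉₊ with hkdef
    have h1 : ‖G t - G ((k:ℝ)/(L:ℝ))‖ ≤ ε/4 :=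
      hδG t ⟨ht0, ht1⟩ _ hkmem (le_trans htk hLδ)
    have h2 : ‖G ((k:ℝ)/(L:ℝ)) - g L k‖ ≤ ε/4 := hN₂ L hLN₂ k hkL
    calc ‖G t - g L k‖ = ‖(G t - G ((k:ℝ)/(L:ℝ))) + (G ((k:ℝ)/(L:ℝ)) - g L k)‖ := by
          congr 1; abel
      _ ≤ ‖G t - G ((k:ℝ)/(L:ℝ))‖ + ‖G ((k:ℝ)/(L:ℝ)) - g L k‖ := norm_add_le _ _
      _ ≤ ε/4 + ε/4 := add_le_add h1 h2
      _ = ε/2 := by ring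
  have hnonempty : Nonempty (Icc (0:ℝ) 1) := ⟨⟨0, le_refl 0, zero_le_one⟩⟩
  have hbdd : BddAbove (Set.range fun t : Icc (0:ℝ) 1 => ‖G t - g L ⌈(L:ℝ) * (t:ℝ)⌉₊‖) := by
    refine ⟨ε/2, ?_⟩
    rintro _ ⟨t, rfl⟩
    exact hpt t
  have hsup_le : (⨆ t : Icc (0:ℝ) 1, ‖G t - g L ⌈(L:ℝ) * (t:ℝ)⌉₊‖) ≤ ε/2 :=
    ciSup_le hpt
  have hsup_ge : (0:ℝ) ≤ ⨆ t : Icc (0:ℝ) 1, ‖G t - g L ⌈(L:ℝ) * (t:ℝ)⌉₊‖ :=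
    le_trans (norm_nonneg _) (le_ciSup hbdd ⟨0, le_refl 0, zero_le_one⟩)
  rw [Real.dist_eq, sub_zero, abs_of_nonneg hsup_ge]
  linarith
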